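/- Let h(ζ) = Σ_{m<0} a_m ζ^m be a Laurent series defining a holomorphic function on ℂ \ {0} with h(∞) = 0, and let k ≥ 2 be an integer. For l ≥ 1 define h_l(ζ) = Σ_{m<0, k^l | m} a_m ζ^m and write h_l(ζ) = f_l(ζ^{k^l}). Then for every 0 < R < 1 and every l ≥ 1, one has sup_{|ζ| ≥ R} |f_l(ζ)| ≤ R^{k^l − 1} · Σ_{m≤0} |a_m| R^m, and consequently for any λ ∈ ℂ* the series Σ_{l≥1} λ^{l−1} f_l converges uniformly on compact subsets of ℂ \ {0}. -/

import Mathlib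

/-- Estimate for the pieces `f_l` of a Laurent series (Section 4): with
`h(ζ) = Σ_{m<0} a_m ζ^m` convergent on `ℂ \ {0}`, `h_l(ζ) = Σ_{m<0, k^l ∣ m} a_m ζ^m`
and `h_l(ζ) = f_l(ζ^{k^l})`, one has for `0 < R < 1`, `l ≥ 1` and `|ξ| ≥ R` the bound
`|f_l(ξ)| ≤ R^{k^l − 1} Σ_{m≤0} |a_m| R^m`; consequently for any `λ ≠ 0` the series
`Σ_{l≥1} λ^{l−1} f_l` converges uniformly on compact subsets of `ℂ \ {0}`. -/
theorem laurent_piece_estimate (k : ℕ) (hk : 2 ≤ k) (a : ℤ → ℂ)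
    (hneg : ∀ m : ℤ, 0 ≤ m → a m = 0)
    (h : ℂ → ℂ) (hh : ∀ ζ : ℂ, ζ ≠ 0 → HasSum (fun m : ℤ => a m * ζ ^ m) (h ζ))
    (habs : ∀ R : ℝ, 0 < R → Summable (fun m : ℕ => ‖a (-(m:ℤ))‖ * R ^ (-(m:ℤ))))
    (fl : ℕ → ℂ → ℂ)
    (hfl : ∀ l : ℕ, 1 ≤ l → ∀ ξ : ℂ, ξ ≠ 0 →
      HasSum (fun j : ℕ => a (-((j:ℤ) + 1) * (k:ℤ) ^ l) * ξ ^ (-((j:ℤ) + 1))) (fl l ξ)) :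
    (∀ R : ℝ, 0 < R → R < 1 → ∀ l : ℕ, 1 ≤ l → ∀ ξ : ℂ, R ≤ ‖ξ‖ →
      ‖fl l ξ‖ ≤
        R ^ ((k:ℤ) ^ l - 1) * ∑' m : ℕ, ‖a (-(m:ℤ))‖ * R ^ (-(m:ℤ))) ∧
    (∀ lam : ℂ, lam ≠ 0 → ∀ K : Set ℂ, IsCompact K → (0:ℂ) ∉ K →
      TendstoUniformlyOn
        (fun n ξ => ∑ l ∈ Finset.range n, lam ^ l * fl (l + 1) ξ)
        (fun ξ => ∑' l : ℕ, lam ^ l * fl (l + 1) ξ) Filter.atTop K) := by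
  have H1 : ∀ R : ℝ, 0 < R → R < 1 → ∀ l : ℕ, 1 ≤ l → ∀ ξ : ℂ, R ≤ ‖ξ‖ →
      ‖fl l ξ‖ ≤
        R ^ ((k:ℤ) ^ l - 1) * ∑' m : ℕ, ‖a (-(m:ℤ))‖ * R ^ (-(m:ℤ)) := by
    intro R hR0 hR1 l hl ξ hξ
    have hξ0 : ξ ≠ 0 := by
      intro h0
      rw [h0] at hξ
      simp at hξ
      linarith
    have hξpos : (0:ℝ) < ‖ξ‖ := lt_of_lt_of_le hR0 hξ
    have hs := hfl l hl ξ hξ0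
    have hRne : R ≠ 0 := ne_of_gt hR0
    set i : ℕ → ℕ := fun j => (j + 1) * k ^ l with hi_def
    have hkl : 0 < k ^ l := pow_pos (by omega) l
    have hi : Function.Injective i := by
      intro j1 j2 hjj
      simp only [hi_def] at hjj
      have := Nat.eq_of_mul_eq_mul_right hkl hjj
      omega
    have hfull := habs R hR0
    have hsub : Summable (fun j : ℕ => ‖a (-((i j):ℤ))‖ * R ^ (-((i j):ℤ))) :=
      hfull.comp_injective hi
    have hcast : ∀ j : ℕ, -(((i j):ℕ):ℤ) = -((j:ℤ) + 1) * (k:ℤ) ^ l := by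
      intro j; simp only [hi_def]; push_cast; ring
    -- termwise bound
    have hbound : ∀ j : ℕ,
        ‖a (-((j:ℤ) + 1) * (k:ℤ) ^ l) * ξ ^ (-((j:ℤ) + 1))‖ ≤
        R ^ ((k:ℤ) ^ l - 1) * (‖a (-((i j):ℤ))‖ * R ^ (-((i j):ℤ))) := by
      intro j
      rw [hcast j]
      have h1 : ‖a (-((j:ℤ) + 1) * (k:ℤ) ^ l) * ξ ^ (-((j:ℤ) + 1))‖ =
          ‖a (-((j:ℤ) + 1) * (k:ℤ) ^ l)‖ * ‖ξ‖ ^ (-((j:ℤ) + 1)) := by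
        rw [norm_mul, norm_zpow]
      rw [h1]
      have h2 : ‖ξ‖ ^ (-((j:ℤ) + 1)) ≤ R ^ (-((j:ℤ) + 1)) := by
        have hpow : R ^ (j + 1) ≤ ‖ξ‖ ^ (j + 1) := pow_le_pow_left₀ hR0.le hξ _
        rw [show -((j:ℤ) + 1) = -((j + 1 : ℕ) : ℤ) by push_cast; ring, zpow_neg, zpow_neg,
          zpow_natCast, zpow_natCast]
        exact inv_anti₀ (pow_pos hR0 _) hpow
      have h3 : R ^ (-((j:ℤ) + 1)) ≤ R ^ ((k:ℤ) ^ l - 1) * R ^ (-((j:ℤ) + 1) * (k:ℤ) ^ l) := by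
        rw [← zpow_add₀ hRne]
        apply zpow_le_zpow_right_of_le_one₀ hR0 (le_of_lt hR1)
        have hkl1 : (1:ℤ) ≤ (k:ℤ) ^ l := by exact_mod_cast hkl
        nlinarith [hkl1, Int.natCast_nonneg j]
      calc ‖a (-((j:ℤ) + 1) * (k:ℤ) ^ l)‖ * ‖ξ‖ ^ (-((j:ℤ) + 1))
          ≤ ‖a (-((j:ℤ) + 1) * (k:ℤ) ^ l)‖ * R ^ (-((j:ℤ) + 1)) := by
            exact mul_le_mul_of_nonneg_left h2 (norm_nonneg _)
        _ ≤ ‖a (-((j:ℤ) + 1) * (k:ℤ) ^ l)‖ *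
              (R ^ ((k:ℤ) ^ l - 1) * R ^ (-((j:ℤ) + 1) * (k:ℤ) ^ l)) :=
            mul_le_mul_of_nonneg_left h3 (norm_nonneg _)
        _ = R ^ ((k:ℤ) ^ l - 1) *
              (‖a (-((j:ℤ) + 1) * (k:ℤ) ^ l)‖ * R ^ (-((j:ℤ) + 1) * (k:ℤ) ^ l)) := by
            ring
    have hg : HasSum
        (fun j : ℕ => R ^ ((k:ℤ) ^ l - 1) * (‖a (-((i j):ℤ))‖ * R ^ (-((i j):ℤ))))
        (R ^ ((k:ℤ) ^ l - 1) * ∑' j : ℕ, ‖a (-((i j):ℤ))‖ * R ^ (-((i j):ℤ))) :=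
      hsub.hasSum.mul_left _
    have hmain := tsum_of_norm_bounded hg hbound
    rw [hs.tsum_eq] at hmain
    refine hmain.trans ?_
    apply mul_le_mul_of_nonneg_left _ (le_of_lt (zpow_pos hR0 _))
    exact Summable.tsum_le_tsum_of_inj i hi
      (fun m _ => mul_nonneg (norm_nonneg _) (le_of_lt (zpow_pos hR0 _)))
      (fun j => le_rfl) hsub hfull
  refine ⟨H1, ?_⟩
  intro lam hlam K hK hK0
  -- find a positive lower bound for |ξ| on K
  obtain ⟨r, hr0, hrK⟩ : ∃ r : ℝ, 0 < r ∧ ∀ ξ ∈ K, r ≤ ‖ξ‖ := by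
    rcases K.eq_empty_or_nonempty with hKe | hKne
    · exact ⟨1, one_pos, by simp [hKe]⟩
    · refine ⟨Metric.infDist 0 K, ?_, ?_⟩
      · exact (hK.isClosed.notMem_iff_infDist_pos hKne).1 hK0
      · intro ξ hξ
        have := Metric.infDist_le_dist_of_mem hξ (x := (0:ℂ))
        rwa [dist_zero_left] at this
  set c : ℝ := ‖lam‖ with hc_def
  have hc0 : 0 ≤ c := norm_nonneg _
  set R : ℝ := min r 1 / (c + 2) with hR_def
  have hR0 : 0 < R := div_pos (lt_min hr0 one_pos) (by linarith)
  have hRle : R ≤ min r 1 / 2 := by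
    apply div_le_div_of_nonneg_left (le_of_lt (lt_min hr0 one_pos)) two_pos
    linarith
  have hR1 : R < 1 := lt_of_le_of_lt hRle (by
    have : min r 1 ≤ 1 := min_le_right _ _
    linarith)
  have hRr : R ≤ r := by
    have h1 : min r 1 / (c + 2) ≤ min r 1 := by
      apply div_le_self (le_of_lt (lt_min hr0 one_pos))
      linarith
    exact le_trans h1 (min_le_left _ _)
  have hcR : c * R < 1 := by
    have h1 : R ≤ 1 / (c + 2) := by
      rw [hR_def, div_le_div_iff₀ (by linarith) (by linarith)]
      nlinarith [min_le_right r 1]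
    have h2 : c * R ≤ c * (1 / (c + 2)) := mul_le_mul_of_nonneg_left h1 hc0
    have h3 : c * (1 / (c + 2)) < 1 := by
      rw [mul_one_div, div_lt_one (by linarith)]
      linarith
    linarith
  set C : ℝ := ∑' m : ℕ, ‖a (-(m:ℤ))‖ * R ^ (-(m:ℤ)) with hC_def
  have hC0 : 0 ≤ C :=
    tsum_nonneg fun m => mul_nonneg (norm_nonneg _) (le_of_lt (zpow_pos hR0 _))
  set u : ℕ → ℝ := fun l => c ^ l * (R ^ ((k:ℤ) ^ (l + 1) - 1) * C) with hu_def
  have hu_nonneg : ∀ l, 0 ≤ u l := fun l =>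
    mul_nonneg (pow_nonneg hc0 _) (mul_nonneg (le_of_lt (zpow_pos hR0 _)) hC0)
  have hu_le : ∀ l : ℕ, u l ≤ (C * R) * (c * R) ^ l := by
    intro l
    have hexp : ((l:ℤ) + 1) ≤ (k:ℤ) ^ (l + 1) - 1 := by
      have h2 : (2:ℤ) ^ (l + 1) ≤ (k:ℤ) ^ (l + 1) := by
        apply pow_le_pow_left₀ (by norm_num) (by exact_mod_cast hk)
      have h3 : (l:ℤ) + 2 ≤ 2 ^ (l + 1) := by
        have := Nat.lt_two_pow_self (n := l + 1)
        exact_mod_cast this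
      linarith
    have hz : R ^ ((k:ℤ) ^ (l + 1) - 1) ≤ R ^ ((l:ℤ) + 1) :=
      zpow_le_zpow_right_of_le_one₀ hR0 (le_of_lt hR1) hexp
    have hz2 : R ^ ((l:ℤ) + 1) = R * R ^ l := by
      rw [show ((l:ℤ) + 1) = ((l + 1 : ℕ) : ℤ) by push_cast; ring, zpow_natCast, pow_succ']
    calc u l = c ^ l * (R ^ ((k:ℤ) ^ (l + 1) - 1) * C) := rfl
      _ ≤ c ^ l * (R ^ ((l:ℤ) + 1) * C) := by
          apply mul_le_mul_of_nonneg_left _ (pow_nonneg hc0 _)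
          exact mul_le_mul_of_nonneg_right hz hC0
      _ = (C * R) * (c * R) ^ l := by rw [hz2, mul_pow]; ring
  have hu : Summable u := by
    apply Summable.of_nonneg_of_le hu_nonneg hu_le
    exact (summable_geometric_of_lt_one (mul_nonneg hc0 (le_of_lt hR0)) hcR).mul_left _
  apply tendstoUniformlyOn_tsum_nat hu
  intro l ξ hξK
  have hRξ : R ≤ ‖ξ‖ := le_trans hRr (hrK ξ hξK)
  have := H1 R hR0 hR1 (l + 1) (by omega) ξ hRξ
  calc ‖lam ^ l * fl (l + 1) ξ‖ = c ^ l * ‖fl (l + 1) ξ‖ := by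
        rw [norm_mul, norm_pow]
    _ ≤ c ^ l * (R ^ ((k:ℤ) ^ (l + 1) - 1) * C) :=
        mul_le_mul_of_nonneg_left this (pow_nonneg hc0 _)
    _ = u l := rfl
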